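/- arXiv:1612.01295 — 5 statements merged into one kernel-verified Lean document; each statement's English description precedes it below -/
import Mathlib

section
/- For any finite graph G and any 2-lift H of G, the number of independent sets of size k in H is at most the number of independent sets of size k in the bipartite double cover G × K₂, i.e., i_k(H) ≤ i_k(G × K₂). -/
open scoped Classical

/-- A 2-lift of `G` determined by a symmetric sign function `s` on pairs of vertices:
`s u v = false` means the edge `(u,v)` lifts to the parallel pair, `true` to the crossing pair. -/
def twoLift {V : Type} (G : SimpleGraph V) (s : V → V → Bool)
    (hs : ∀ u v, s u v = s v u) : SimpleGraph (V × Bool) where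
  Adj a b := G.Adj a.1 b.1 ∧ xor a.2 b.2 = s a.1 b.1
  symm := by
    constructor
    rintro a b ⟨h1, h2⟩
    exact ⟨h1.symm, by rw [hs b.1 a.1, ← h2]; exact Bool.xor_comm _ _⟩
  loopless := by constructor; rintro a ⟨h1, _⟩; exact G.irrefl h1

/-- The bipartite double cover `G × K₂`: the 2-lift in which every edge is crossing. -/
def doubleCover {V : Type} (G : SimpleGraph V) : SimpleGraph (V × Bool) :=
  twoLift G (fun _ _ => true) (fun _ _ => rfl)

/-- The number of independent sets of size `k` in `H`. -/
noncomputable def indepCount {W : Type} [Fintype W] (H : SimpleGraph W) (k : ℕ) : ℕ :=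
  Nat.card {I : Finset W // I.card = k ∧
    (↑I : Set W).Pairwise fun a b => ¬ H.Adj a b}

namespace TwoLiftAux

variable {V : Type}

/-- Independence predicate matching `indepCount`. -/
def Ind {W : Type} (H : SimpleGraph W) (I : Finset W) : Prop :=
  (↑I : Set W).Pairwise fun a b => ¬ H.Adj a b

/-- `v` is singly covered by `I`. -/
def sing (I : Finset (V × Bool)) (v : V) : Prop :=
  Xor' ((v, false) ∈ I) ((v, true) ∈ I)

/-- The graph induced on singly covered vertices (as a graph on all of `V`). -/
def Bgraph (G : SimpleGraph V) (I : Finset (V × Bool)) : SimpleGraph V where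
  Adj u v := G.Adj u v ∧ sing I u ∧ sing I v
  symm := by constructor; rintro _ _ ⟨h, hu, hv⟩; exact ⟨h.symm, hv, hu⟩
  loopless := by constructor; rintro v ⟨h, _⟩; exact G.irrefl h

noncomputable def rep (G : SimpleGraph V) (I : Finset (V × Bool)) (v : V) : V :=
  ((Bgraph G I).connectedComponentMk v).out

noncomputable def eps (I : Finset (V × Bool)) (v : V) : Bool :=
  decide ((v, true) ∈ I)

noncomputable def tw (G : SimpleGraph V) (I : Finset (V × Bool)) (v : V) : Bool :=
  xor (eps I v) (eps I (rep G I v))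

noncomputable def Phi (G : SimpleGraph V) (I : Finset (V × Bool)) : Finset (V × Bool) :=
  I.image fun p => (p.1, xor p.2 (tw G I p.1))

lemma bool_xor_cancel : ∀ b t : Bool, xor (xor b t) t = b := by decide

lemma mem_Phi {G : SimpleGraph V} {I : Finset (V × Bool)} {v : V} {c : Bool} :
    (v, c) ∈ Phi G I ↔ (v, xor c (tw G I v)) ∈ I := by
  constructor
  · rintro h
    obtain ⟨⟨u, b⟩, hu, heq⟩ := Finset.mem_image.mp h
    have h1 : u = v := congrArg Prod.fst heq
    have h2 : xor b (tw G I u) = c := congrArg Prod.snd heq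
    subst h1
    have : b = xor c (tw G I u) := by rw [← h2, bool_xor_cancel]
    rwa [← this]
  · intro h
    refine Finset.mem_image.mpr ⟨(v, xor c (tw G I v)), h, ?_⟩
    simp [bool_xor_cancel]

lemma card_Phi {G : SimpleGraph V} {I : Finset (V × Bool)} :
    (Phi G I).card = I.card := by
  apply Finset.card_image_of_injective
  rintro ⟨u, a⟩ ⟨v, b⟩ h
  have h1 : u = v := congrArg Prod.fst h
  subst h1
  have h2 : xor a (tw G I u) = xor b (tw G I u) := congrArg Prod.snd h
  have : a = b := by
    have := congrArg (fun x => xor x (tw G I u)) h2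
    simpa [bool_xor_cancel] using this
  rw [this]

lemma sing_eps_mem {I : Finset (V × Bool)} {v : V} (h : sing I v) :
    (v, eps I v) ∈ I := by
  unfold eps
  by_cases h1 : (v, true) ∈ I
  · rw [decide_eq_true h1]; exact h1
  · rcases h with ⟨hf, _⟩ | ⟨ht, _⟩
    · simpa [h1] using hf
    · exact absurd ht h1

lemma sing_unique {I : Finset (V × Bool)} {v : V} {a : Bool} (h : sing I v)
    (ha : (v, a) ∈ I) : a = eps I v := by
  unfold eps
  rcases h with ⟨hf, hnt⟩ | ⟨ht, hnf⟩
  · cases a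
    · simp [show ¬((v, true) ∈ I) from hnt]
    · exact absurd ha hnt
  · cases a
    · exact absurd ha hnf
    · simp [ht]

lemma not_sing_iff {I : Finset (V × Bool)} {v : V} (h : ¬ sing I v) (a b : Bool) :
    (v, a) ∈ I ↔ (v, b) ∈ I := by
  unfold sing Xor' Xor at h
  have hiff : ((v, false) ∈ I) ↔ ((v, true) ∈ I) := by tauto
  cases a <;> cases b <;> simp [hiff]

section Lift

variable {G : SimpleGraph V} {s : V → V → Bool} {hs : ∀ u v, s u v = s v u}

lemma ind_labels {I : Finset (V × Bool)} (hI : Ind (twoLift G s hs) I)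
    {u v : V} {a b : Bool} (hadj : G.Adj u v) (ha : (u, a) ∈ I) (hb : (v, b) ∈ I) :
    xor a b = !(s u v) := by
  have hne : (u, a) ≠ (v, b) := by
    intro h
    have huv : u = v := congrArg Prod.fst h
    subst huv
    exact G.irrefl hadj
  have hnadj : ¬ (twoLift G s hs).Adj (u, a) (v, b) :=
    hI (Finset.mem_coe.mpr ha) (Finset.mem_coe.mpr hb) hne
  have : ¬ (xor a b = s u v) := fun h => hnadj ⟨hadj, h⟩
  revert this
  cases (xor a b) <;> cases (s u v) <;> simp

lemma sing_of_ind_adj {I : Finset (V × Bool)} (hI : Ind (twoLift G s hs) I)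
    {u v : V} {a b : Bool} (hadj : G.Adj u v) (ha : (u, a) ∈ I) (hb : (v, b) ∈ I) :
    sing I u := by
  unfold sing Xor'
  by_cases hf : (u, false) ∈ I
  · by_cases ht : (u, true) ∈ I
    · exfalso
      have h1 := ind_labels hI hadj hf hb
      have h2 := ind_labels hI hadj ht hb
      revert h1 h2
      cases b <;> cases (s u v) <;> simp
    · exact Or.inl ⟨hf, ht⟩
  · by_cases ht : (u, true) ∈ I
    · exact Or.inr ⟨ht, hf⟩
    · exfalso
      cases a
      · exact hf ha
      · exact ht ha

lemma label_edge {I : Finset (V × Bool)} (hI : Ind (twoLift G s hs) I)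
    {u v : V} (h : (Bgraph G I).Adj u v) :
    xor (eps I u) (eps I v) = !(s u v) := by
  obtain ⟨hadj, hu, hv⟩ := h
  exact ind_labels hI hadj (sing_eps_mem hu) (sing_eps_mem hv)

lemma sing_Phi {I : Finset (V × Bool)} {v : V} :
    sing (Phi G I) v ↔ sing I v := by
  unfold sing
  rw [show ((v, false) ∈ Phi G I) ↔ ((v, xor false (tw G I v)) ∈ I) from mem_Phi,
      show ((v, true) ∈ Phi G I) ↔ ((v, xor true (tw G I v)) ∈ I) from mem_Phi]
  cases htw : tw G I v <;> simp [Xor', Xor, and_comm, or_comm]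

lemma bool_step : ∀ a b c d : Bool, xor a b = xor c d → xor a c = xor b d := by decide

lemma d_const {I₁ I₂ : Finset (V × Bool)} (h1 : Ind (twoLift G s hs) I₁)
    (h2 : Ind (twoLift G s hs) I₂) (hsg : ∀ w, sing I₁ w ↔ sing I₂ w)
    {u v : V} (hr : (Bgraph G I₁).Reachable u v) :
    xor (eps I₁ u) (eps I₂ u) = xor (eps I₁ v) (eps I₂ v) := by
  obtain ⟨w⟩ := hr
  induction w with
  | nil => rfl
  | @cons a b c hadj p ih =>
    refine Eq.trans ?_ ih
    obtain ⟨hG, hsa, hsb⟩ := hadj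
    have e1 : xor (eps I₁ a) (eps I₁ b) = !(s a b) :=
      label_edge h1 ⟨hG, hsa, hsb⟩
    have e2 : xor (eps I₂ a) (eps I₂ b) = !(s a b) :=
      label_edge h2 ⟨hG, (hsg a).mp hsa, (hsg b).mp hsb⟩
    exact bool_step _ _ _ _ (e1.trans e2.symm)

lemma Bgraph_eq {I₁ I₂ : Finset (V × Bool)} (hsg : ∀ w, sing I₁ w ↔ sing I₂ w) :
    Bgraph G I₁ = Bgraph G I₂ := by
  ext u v
  show G.Adj u v ∧ sing I₁ u ∧ sing I₁ v ↔ G.Adj u v ∧ sing I₂ u ∧ sing I₂ v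
  rw [hsg u, hsg v]

lemma rep_reachable {I : Finset (V × Bool)} (v : V) :
    (Bgraph G I).Reachable v (rep G I v) := by
  have : (Bgraph G I).connectedComponentMk (rep G I v)
      = (Bgraph G I).connectedComponentMk v := by
    unfold rep
    exact ((Bgraph G I).connectedComponentMk v).out_eq
  exact (SimpleGraph.ConnectedComponent.eq.mp this).symm

lemma rep_eq_of_adj {I : Finset (V × Bool)} {u v : V}
    (h : (Bgraph G I).Adj u v) : rep G I u = rep G I v := by
  unfold rep
  rw [SimpleGraph.ConnectedComponent.eq.mpr h.reachable]

lemma Phi_ind {I : Finset (V × Bool)} (hI : Ind (twoLift G s hs) I) :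
    Ind (doubleCover G) (Phi G I) := by
  rintro ⟨u, a⟩ hu ⟨v, b⟩ hv hne hadj
  obtain ⟨hG, hx⟩ := hadj
  simp only at hG hx
  have hu' : (u, xor a (tw G I u)) ∈ I := mem_Phi.mp (Finset.mem_coe.mp hu)
  have hv' : (v, xor b (tw G I v)) ∈ I := mem_Phi.mp (Finset.mem_coe.mp hv)
  have hsu : sing I u := sing_of_ind_adj hI hG hu' hv'
  have hsv : sing I v := sing_of_ind_adj hI hG.symm hv' hu'
  have hrep : rep G I u = rep G I v := rep_eq_of_adj ⟨hG, hsu, hsv⟩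
  -- the unique label over u is eps I u, hence a = eps I (rep u)
  have hau : xor a (tw G I u) = eps I u := sing_unique hsu hu'
  have hbv : xor b (tw G I v) = eps I v := sing_unique hsv hv'
  have ha : a = eps I (rep G I u) := by
    have := congrArg (fun x => xor x (tw G I u)) hau
    simp only [bool_xor_cancel] at this
    rw [this]
    unfold tw
    cases (eps I u) <;> cases (eps I (rep G I u)) <;> rfl
  have hb : b = eps I (rep G I v) := by
    have := congrArg (fun x => xor x (tw G I v)) hbv
    simp only [bool_xor_cancel] at this
    rw [this]
    unfold tw
    cases (eps I v) <;> cases (eps I (rep G I v)) <;> rfl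
  rw [ha, hb, hrep] at hx
  revert hx
  cases (eps I (rep G I v)) <;> simp [doubleCover]

lemma Phi_inj {I₁ I₂ : Finset (V × Bool)} (h1 : Ind (twoLift G s hs) I₁)
    (h2 : Ind (twoLift G s hs) I₂) (hEq : Phi G I₁ = Phi G I₂) : I₁ = I₂ := by
  have hsg : ∀ w, sing I₁ w ↔ sing I₂ w := by
    intro w
    rw [← sing_Phi (G := G) (I := I₁), ← sing_Phi (G := G) (I := I₂), hEq]
  have hBeq : Bgraph G I₁ = Bgraph G I₂ := Bgraph_eq hsg
  have hrepEq : ∀ v, rep G I₁ v = rep G I₂ v := by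
    intro v; unfold rep; rw [hBeq]
  ext ⟨v, b⟩
  by_cases hsv : sing I₁ v
  · -- singles: show eps I₁ v = eps I₂ v, hence tw equal
    have hsv2 : sing I₂ v := (hsg v).mp hsv
    set r := rep G I₁ v with hr
    -- (v, eps I₁ r) ∈ Phi G I₁ and (v, eps I₂ r) ∈ Phi G I₂ = Phi G I₁
    have hm1 : (v, eps I₁ r) ∈ Phi G I₁ := by
      apply mem_Phi.mpr
      have : xor (eps I₁ r) (tw G I₁ v) = eps I₁ v := by
        unfold tw; rw [← hr]
        cases (eps I₁ v) <;> cases (eps I₁ r) <;> rfl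
      rw [this]
      exact sing_eps_mem hsv
    have hm2 : (v, eps I₂ r) ∈ Phi G I₁ := by
      rw [hEq]
      apply mem_Phi.mpr
      have : xor (eps I₂ r) (tw G I₂ v) = eps I₂ v := by
        unfold tw; rw [← hrepEq v, ← hr]
        cases (eps I₂ v) <;> cases (eps I₂ r) <;> rfl
      rw [this]
      exact sing_eps_mem hsv2
    have hsP : sing (Phi G I₁) v := sing_Phi.mpr hsv
    have hre : eps I₁ r = eps I₂ r :=
      (sing_unique hsP hm1).trans (sing_unique hsP hm2).symm
    have hd : xor (eps I₁ v) (eps I₂ v) = xor (eps I₁ r) (eps I₂ r) :=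
      d_const h1 h2 hsg (rep_reachable v)
    have hev : eps I₁ v = eps I₂ v := by
      rw [hre] at hd
      revert hd
      cases (eps I₁ v) <;> cases (eps I₂ v) <;> cases (eps I₂ r) <;> simp
    have htw : tw G I₁ v = tw G I₂ v := by
      unfold tw
      rw [← hrepEq v, ← hr, hev, hre]
    constructor
    · intro hm
      have : (v, xor b (tw G I₁ v)) ∈ Phi G I₁ := by
        apply mem_Phi.mpr
        rwa [bool_xor_cancel]
      rw [hEq] at this
      have := mem_Phi.mp this
      rwa [← htw, bool_xor_cancel] at this
    · intro hm
      have : (v, xor b (tw G I₂ v)) ∈ Phi G I₂ := by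
        apply mem_Phi.mpr
        rwa [bool_xor_cancel]
      rw [← hEq] at this
      have := mem_Phi.mp this
      rwa [htw, bool_xor_cancel] at this
  · -- not single: membership independent of label
    have hsv2 : ¬ sing I₂ v := fun h => hsv ((hsg v).mpr h)
    have hsP : ¬ sing (Phi G I₁) v := fun h => hsv (sing_Phi.mp h)
    constructor
    · intro hm
      have : (v, xor b (tw G I₁ v)) ∈ Phi G I₁ := by
        apply mem_Phi.mpr; rwa [bool_xor_cancel]
      rw [hEq] at this
      have := mem_Phi.mp this
      exact (not_sing_iff hsv2 _ _).mp this
    · intro hm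
      have : (v, xor b (tw G I₂ v)) ∈ Phi G I₂ := by
        apply mem_Phi.mpr; rwa [bool_xor_cancel]
      rw [← hEq] at this
      have := mem_Phi.mp this
      exact (not_sing_iff hsv _ _).mp this

end Lift

end TwoLiftAux

theorem independent_sets_of_two_lift_le {V : Type} [Fintype V] (G : SimpleGraph V)
    (s : V → V → Bool) (hs : ∀ u v, s u v = s v u) (k : ℕ) :
    indepCount (twoLift G s hs) k ≤ indepCount (doubleCover G) k := by
  classical
  unfold indepCount
  refine Nat.card_le_card_of_injective
    (fun I => (⟨TwoLiftAux.Phi G I.1,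
      (TwoLiftAux.card_Phi).trans I.2.1,
      TwoLiftAux.Phi_ind (hs := hs) I.2.2⟩ :
      {I : Finset (V × Bool) // I.card = k ∧
        (↑I : Set (V × Bool)).Pairwise fun a b => ¬ (doubleCover G).Adj a b})) ?_
  rintro ⟨I₁, h1c, h1i⟩ ⟨I₂, h2c, h2i⟩ hFeq
  have h' : TwoLiftAux.Phi G I₁ = TwoLiftAux.Phi G I₂ := by
    have := congrArg Subtype.val hFeq
    simpa using this
  exact Subtype.ext (TwoLiftAux.Phi_inj (hs := hs) h1i h2i h')
end

section
/- Let A be a nonnegative symmetric q × q real matrix that is TP₂ (every 2 × 2 minor of A is nonnegative). Then for any finite graph G and any 2-lift H of G, we have Z(G,A)² ≥ Z(H,A), where Z(G,A) = Σ_{φ:V(G)→[q]} Π_{(u,v)∈E(G)} a_{φ(u),φ(v)}. -/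
open scoped Classical

/-- The homomorphism partition function `Z(G,A) = Σ_φ Π_{(u,v)∈E(G)} A (φ u) (φ v)`.
(Each edge is an unordered pair; for symmetric `A` the choice of representative is immaterial.) -/
noncomputable def Z {V ι : Type} [Fintype V] [Fintype ι] (G : SimpleGraph V)
    (A : Matrix ι ι ℝ) : ℝ :=
  ∑ φ : V → ι, ∏ e ∈ G.edgeFinset,
    A (φ (Quot.out e).1) (φ (Quot.out e).2)

set_option linter.unusedSectionVars false

open Finset

namespace TP2Aux


noncomputable def chi (b : Bool) : ℝ := if b then -1 else 1

lemma chi_xor (a b : Bool) : chi (xor a b) = chi a * chi b := by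
  cases a <;> cases b <;> norm_num [chi]

lemma chi_cases (b : Bool) : chi b = 1 ∨ chi b = -1 := by
  cases b <;> simp [chi]

/-- sum of a multiplicative character on (V → Bool) is nonnegative -/
lemma char_sum_nonneg {V : Type} [Fintype V] (h : (V → Bool) → ℝ)
    (hm : ∀ ε δ : V → Bool, h (fun v => xor (ε v) (δ v)) = h ε * h δ) :
    0 ≤ ∑ ε : V → Bool, h ε := by
  set S := ∑ ε : V → Bool, h ε with hS
  have hfix : ∀ δ : V → Bool, S * h δ = S := by
    intro δ
    calc S * h δ = ∑ ε : V → Bool, h ε * h δ := by rw [Finset.sum_mul]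
    _ = ∑ ε : V → Bool, h (fun v => xor (ε v) (δ v)) := by simp_rw [hm]
    _ = S := by
        refine Fintype.sum_equiv (Function.Involutive.toPerm
          (fun ε : V → Bool => fun v => xor (ε v) (δ v)) ?_) _ _ (fun ε => rfl)
        intro ε; funext v; simp [Bool.xor_assoc]
  have hsq : S * S = (Fintype.card (V → Bool) : ℝ) * S := by
    calc S * S = ∑ δ : V → Bool, S * h δ := by rw [← Finset.mul_sum]
    _ = ∑ _δ : V → Bool, S := by simp_rw [hfix]
    _ = (Fintype.card (V → Bool) : ℝ) * S := by
        rw [Finset.sum_const, Finset.card_univ, nsmul_eq_mul]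
  have hcpos : (0:ℝ) < (Fintype.card (V → Bool) : ℝ) := by
    exact_mod_cast Fintype.card_pos
  nlinarith [mul_self_nonneg S]

variable {q : ℕ} {V : Type}

/-- edge weight: parallel (`b = false`) or crossing (`b = true`) pair product -/
noncomputable def wgt (A : Matrix (Fin q) (Fin q) ℝ) (x y : V → Fin q)
    (e : Sym2 V) (b : Bool) : ℝ :=
  if b then A (x (Quot.out e).1) (y (Quot.out e).2) * A (y (Quot.out e).1) (x (Quot.out e).2)
  else A (x (Quot.out e).1) (x (Quot.out e).2) * A (y (Quot.out e).1) (y (Quot.out e).2)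

def swp (ε : V → Bool) (x y : V → Fin q) : V → Fin q := fun u => if ε u then y u else x u

lemma wgt_swp (A : Matrix (Fin q) (Fin q) ℝ) (x y : V → Fin q) (ε : V → Bool)
    (e : Sym2 V) (b : Bool) :
    wgt A (swp ε x y) (swp ε y x) e b
      = wgt A x y e (xor b (xor (ε (Quot.out e).1) (ε (Quot.out e).2))) := by
  cases hb : b <;> cases h1 : ε (Quot.out e).1 <;> cases h2 : ε (Quot.out e).2 <;>
    simp [wgt, swp, h1, h2, mul_comm]

lemma wgt_nonneg (A : Matrix (Fin q) (Fin q) ℝ) (hnn : ∀ i j, 0 ≤ A i j)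
    (x y : V → Fin q) (e : Sym2 V) (b : Bool) : 0 ≤ wgt A x y e b := by
  cases b <;> simp [wgt] <;> exact mul_nonneg (hnn _ _) (hnn _ _)

lemma wgt_diff_nonneg (A : Matrix (Fin q) (Fin q) ℝ)
    (hTP : ∀ i j r s : Fin q, i < j → r < s → 0 ≤ A i r * A j s - A i s * A j r)
    (x y : V → Fin q) (hxy : ∀ u, x u ≤ y u) (e : Sym2 V) :
    0 ≤ wgt A x y e false - wgt A x y e true := by
  rcases eq_or_lt_of_le (hxy (Quot.out e).1) with h1 | h1
  · simp [wgt, ← h1, mul_comm]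
  · rcases eq_or_lt_of_le (hxy (Quot.out e).2) with h2 | h2
    · simp [wgt, ← h2, mul_comm]
    · simpa [wgt] using hTP _ _ _ _ h1 h2


lemma sum_mul_const {α : Type} [Fintype α] (F : α → ℝ) (c1 c2 c3 : ℝ) :
    ∑ ε : α, F ε * c1 * c2 * c3 = c1 * (c2 * c3 * ∑ ε : α, F ε) := by
  rw [← Finset.sum_mul, ← Finset.sum_mul, ← Finset.sum_mul]; ring

variable [Fintype V]

noncomputable def TT (A : Matrix (Fin q) (Fin q) ℝ) (G : SimpleGraph V)
    (s' : V → V → Bool) (x y : V → Fin q) : ℝ :=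
  ∑ ε : V → Bool, ∏ e ∈ G.edgeFinset,
    wgt A x y e (xor (xor (ε (Quot.out e).1) (ε (Quot.out e).2))
      (s' (Quot.out e).1 (Quot.out e).2))

lemma TT_eq (A : Matrix (Fin q) (Fin q) ℝ) (G : SimpleGraph V)
    (s' : V → V → Bool) (x y : V → Fin q) :
    TT A G s' x y = ∑ t ∈ G.edgeFinset.powerset,
      (∏ e ∈ t, chi (s' (Quot.out e).1 (Quot.out e).2)) *
      ((∏ e ∈ t, (wgt A x y e false - wgt A x y e true) / 2) *
       (∏ e ∈ G.edgeFinset \ t, (wgt A x y e false + wgt A x y e true) / 2) *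
       (∑ ε : V → Bool, ∏ e ∈ t, chi (xor (ε (Quot.out e).1) (ε (Quot.out e).2)))) := by
  unfold TT
  have hdec : ∀ (ε : V → Bool) (e : Sym2 V),
      wgt A x y e (xor (xor (ε (Quot.out e).1) (ε (Quot.out e).2))
          (s' (Quot.out e).1 (Quot.out e).2))
        = chi (xor (ε (Quot.out e).1) (ε (Quot.out e).2)) *
            chi (s' (Quot.out e).1 (Quot.out e).2) *
            ((wgt A x y e false - wgt A x y e true) / 2)
          + (wgt A x y e false + wgt A x y e true) / 2 := by
    intro ε e
    rw [← chi_xor]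
    generalize xor (xor (ε (Quot.out e).1) (ε (Quot.out e).2))
      (s' (Quot.out e).1 (Quot.out e).2) = b
    cases b <;> simp [chi] <;> ring
  simp_rw [hdec, Finset.prod_add]
  rw [Finset.sum_comm]
  refine Finset.sum_congr rfl fun t ht => ?_
  simp_rw [Finset.prod_mul_distrib]
  exact sum_mul_const _ _ _ _

lemma TT_le_sorted (A : Matrix (Fin q) (Fin q) ℝ) (hnn : ∀ i j, 0 ≤ A i j)
    (hTP : ∀ i j r s : Fin q, i < j → r < s → 0 ≤ A i r * A j s - A i s * A j r)
    (G : SimpleGraph V) (s' : V → V → Bool) (x y : V → Fin q)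
    (hxy : ∀ u, x u ≤ y u) :
    TT A G s' x y ≤ TT A G (fun _ _ => false) x y := by
  rw [TT_eq, TT_eq]
  refine Finset.sum_le_sum fun t ht => ?_
  have hK : 0 ≤ ∑ ε : V → Bool, ∏ e ∈ t, chi (xor (ε (Quot.out e).1) (ε (Quot.out e).2)) := by
    apply char_sum_nonneg
    intro ε δ
    rw [← Finset.prod_mul_distrib]
    refine Finset.prod_congr rfl fun e he => ?_
    cases h1 : ε (Quot.out e).1 <;> cases h2 : ε (Quot.out e).2 <;>
      cases h3 : δ (Quot.out e).1 <;> cases h4 : δ (Quot.out e).2 <;>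
      simp [chi, h1, h2, h3, h4]
  have hd : 0 ≤ ∏ e ∈ t, (wgt A x y e false - wgt A x y e true) / 2 :=
    Finset.prod_nonneg fun e _ =>
      div_nonneg (wgt_diff_nonneg A hTP x y hxy e) (by norm_num)
  have ha : 0 ≤ ∏ e ∈ G.edgeFinset \ t, (wgt A x y e false + wgt A x y e true) / 2 :=
    Finset.prod_nonneg fun e _ =>
      div_nonneg (add_nonneg (wgt_nonneg A hnn x y e false) (wgt_nonneg A hnn x y e true))
        (by norm_num)
  have hc : 0 ≤ (∏ e ∈ t, (wgt A x y e false - wgt A x y e true) / 2) *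
      (∏ e ∈ G.edgeFinset \ t, (wgt A x y e false + wgt A x y e true) / 2) *
      (∑ ε : V → Bool, ∏ e ∈ t, chi (xor (ε (Quot.out e).1) (ε (Quot.out e).2))) :=
    mul_nonneg (mul_nonneg hd ha) hK
  have hchi : (∏ e ∈ t, chi (s' (Quot.out e).1 (Quot.out e).2)) ≤ 1 := by
    have hcases : (∏ e ∈ t, chi (s' (Quot.out e).1 (Quot.out e).2)) = 1 ∨
        (∏ e ∈ t, chi (s' (Quot.out e).1 (Quot.out e).2)) = -1 := by
      refine Finset.prod_induction _ (fun z : ℝ => z = 1 ∨ z = -1) ?_ (Or.inl rfl)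
        (fun e _ => chi_cases _)
      rintro a b (ha | ha) (hb | hb) <;> rw [ha, hb] <;> norm_num
    rcases hcases with h | h <;> rw [h] <;> norm_num
  calc (∏ e ∈ t, chi (s' (Quot.out e).1 (Quot.out e).2)) * _ ≤ 1 * _ :=
        mul_le_mul_of_nonneg_right hchi hc
  _ = (∏ e ∈ t, chi ((fun _ _ => false) (Quot.out e).1 (Quot.out e).2)) * _ := by
        simp [chi]

lemma swp_swp (ε : V → Bool) (x y : V → Fin q) : swp ε (swp ε x y) (swp ε y x) = x := by
  funext u; cases h : ε u <;> simp [swp, h]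

lemma TT_swp (A : Matrix (Fin q) (Fin q) ℝ) (G : SimpleGraph V)
    (s' : V → V → Bool) (x y : V → Fin q) (δ : V → Bool) :
    TT A G s' (swp δ x y) (swp δ y x) = TT A G s' x y := by
  unfold TT
  refine Fintype.sum_equiv
      ⟨fun ε v => xor (ε v) (δ v), fun ε v => xor (ε v) (δ v),
        fun ε => by funext v; simp [Bool.xor_assoc],
        fun ε => by funext v; simp [Bool.xor_assoc]⟩ _ _ ?_
  intro ε
  refine Finset.prod_congr rfl fun e he => ?_
  rw [wgt_swp]
  simp only [Equiv.coe_fn_mk]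
  congr 1
  cases h1 : ε (Quot.out e).1 <;> cases h2 : ε (Quot.out e).2 <;>
    cases h3 : δ (Quot.out e).1 <;> cases h4 : δ (Quot.out e).2 <;>
    cases h5 : s' (Quot.out e).1 (Quot.out e).2 <;>
    simp [h1, h2, h3, h4, h5]

lemma TT_le (A : Matrix (Fin q) (Fin q) ℝ) (hnn : ∀ i j, 0 ≤ A i j)
    (hTP : ∀ i j r s : Fin q, i < j → r < s → 0 ≤ A i r * A j s - A i s * A j r)
    (G : SimpleGraph V) (s' : V → V → Bool) (x y : V → Fin q) :
    TT A G s' x y ≤ TT A G (fun _ _ => false) x y := by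
  set δ : V → Bool := fun u => decide (y u < x u) with hδ
  have hsort : ∀ u, swp δ x y u ≤ swp δ y x u := by
    intro u
    by_cases h : y u < x u
    · simpa [swp, hδ, h] using h.le
    · simpa [swp, hδ, h] using not_lt.mp h
  calc TT A G s' x y = TT A G s' (swp δ x y) (swp δ y x) := (TT_swp A G s' x y δ).symm
  _ ≤ TT A G (fun _ _ => false) (swp δ x y) (swp δ y x) :=
      TT_le_sorted A hnn hTP G s' _ _ hsort
  _ = TT A G (fun _ _ => false) x y := TT_swp A G _ x y δ


lemma sum_TT (A : Matrix (Fin q) (Fin q) ℝ) (G : SimpleGraph V) (s' : V → V → Bool) :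
    ∑ p : (V → Fin q) × (V → Fin q), TT A G s' p.1 p.2
      = (Fintype.card (V → Bool) : ℝ) *
        ∑ p : (V → Fin q) × (V → Fin q), ∏ e ∈ G.edgeFinset,
          wgt A p.1 p.2 e (s' (Quot.out e).1 (Quot.out e).2) := by
  unfold TT
  rw [Finset.sum_comm]
  have hfix : ∀ ε : V → Bool,
      (∑ p : (V → Fin q) × (V → Fin q), ∏ e ∈ G.edgeFinset,
        wgt A p.1 p.2 e (xor (xor (ε (Quot.out e).1) (ε (Quot.out e).2))
          (s' (Quot.out e).1 (Quot.out e).2)))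
      = ∑ p : (V → Fin q) × (V → Fin q), ∏ e ∈ G.edgeFinset,
          wgt A p.1 p.2 e (s' (Quot.out e).1 (Quot.out e).2) := by
    intro ε
    refine Fintype.sum_equiv
        ⟨fun p => (swp ε p.1 p.2, swp ε p.2 p.1), fun p => (swp ε p.1 p.2, swp ε p.2 p.1),
          fun p => by simp [swp_swp], fun p => by simp [swp_swp]⟩ _ _ ?_
    intro p
    simp only [Equiv.coe_fn_mk]
    refine Finset.prod_congr rfl fun e he => ?_
    rw [wgt_swp]
    congr 1
    cases h1 : ε (Quot.out e).1 <;> cases h2 : ε (Quot.out e).2 <;>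
      cases h3 : s' (Quot.out e).1 (Quot.out e).2 <;> simp [h1, h2, h3]
  simp_rw [hfix]
  rw [Finset.sum_const, Finset.card_univ, nsmul_eq_mul]

lemma Z_sq (A : Matrix (Fin q) (Fin q) ℝ) (G : SimpleGraph V) :
    Z G A ^ 2 = ∑ p : (V → Fin q) × (V → Fin q), ∏ e ∈ G.edgeFinset,
      wgt A p.1 p.2 e false := by
  have : ∀ p : (V → Fin q) × (V → Fin q),
      (∏ e ∈ G.edgeFinset, wgt A p.1 p.2 e false)
        = (∏ e ∈ G.edgeFinset, A (p.1 (Quot.out e).1) (p.1 (Quot.out e).2)) *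
          (∏ e ∈ G.edgeFinset, A (p.2 (Quot.out e).1) (p.2 (Quot.out e).2)) := by
    intro p
    rw [← Finset.prod_mul_distrib]
    exact Finset.prod_congr rfl fun e _ => by simp [wgt]
  rw [sq]
  unfold Z
  rw [Finset.sum_mul_sum]
  rw [show (∑ p : (V → Fin q) × (V → Fin q), ∏ e ∈ G.edgeFinset, wgt A p.1 p.2 e false)
      = ∑ x : V → Fin q, ∑ y : V → Fin q,
          (∏ e ∈ G.edgeFinset, A (x (Quot.out e).1) (x (Quot.out e).2)) *
          (∏ e ∈ G.edgeFinset, A (y (Quot.out e).1) (y (Quot.out e).2)) from by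
    simp_rw [this]; exact Fintype.sum_prod_type _]

lemma out_mk {α : Type} (e : Sym2 α) : s((Quot.out e).1, (Quot.out e).2) = e :=
  Quot.out_eq e

lemma adj_out {W : Type} (G' : SimpleGraph W) {e : Sym2 W} (he : e ∈ G'.edgeSet) :
    G'.Adj (Quot.out e).1 (Quot.out e).2 := by
  rw [← out_mk e] at he
  exact G'.mem_edgeSet.mp he

lemma Z_twoLift (A : Matrix (Fin q) (Fin q) ℝ) (hsymm : A.IsSymm) (G : SimpleGraph V)
    (s : V → V → Bool) (hs : ∀ u v, s u v = s v u) :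
    Z (twoLift G s hs) A = ∑ p : (V → Fin q) × (V → Fin q), ∏ e ∈ G.edgeFinset,
      wgt A p.1 p.2 e (s (Quot.out e).1 (Quot.out e).2) := by
  have hA : ∀ a b : Fin q, A a b = A b a := fun a b => hsymm.apply b a
  unfold Z
  have step : ∀ ψ : V × Bool → Fin q,
      (∏ f ∈ (twoLift G s hs).edgeFinset, A (ψ (Quot.out f).1) (ψ (Quot.out f).2))
        = ∏ e ∈ G.edgeFinset,
            wgt A (fun u => ψ (u, false)) (fun u => ψ (u, true)) e
              (s (Quot.out e).1 (Quot.out e).2) := by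
    intro ψ
    -- replace the arbitrary representative by a Sym2.lift
    have step1 : (∏ f ∈ (twoLift G s hs).edgeFinset, A (ψ (Quot.out f).1) (ψ (Quot.out f).2))
        = ∏ f ∈ (twoLift G s hs).edgeFinset,
            Sym2.lift ⟨fun a b => A (ψ a) (ψ b), fun a b => hA (ψ a) (ψ b)⟩ f := by
      refine Finset.prod_congr rfl fun f hf => ?_
      conv_rhs => rw [← out_mk f]
      rfl
    rw [step1]
    -- bijection between lifted edges and (edge, sheet) pairs
    have step2 : (∏ pb ∈ G.edgeFinset ×ˢ (Finset.univ : Finset Bool),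
          A (ψ ((Quot.out pb.1).1, pb.2))
            (ψ ((Quot.out pb.1).2, xor pb.2 (s (Quot.out pb.1).1 (Quot.out pb.1).2))))
        = ∏ f ∈ (twoLift G s hs).edgeFinset,
            Sym2.lift ⟨fun a b => A (ψ a) (ψ b), fun a b => hA (ψ a) (ψ b)⟩ f := by
      refine Finset.prod_bij (fun pb _ =>
          (s(((Quot.out pb.1).1, pb.2),
             ((Quot.out pb.1).2, xor pb.2 (s (Quot.out pb.1).1 (Quot.out pb.1).2)))
            : Sym2 (V × Bool))) ?_ ?_ ?_ ?_
      · rintro ⟨e, b⟩ hmem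
        rw [Finset.mem_product] at hmem
        have hadj : G.Adj (Quot.out e).1 (Quot.out e).2 :=
          adj_out G (SimpleGraph.mem_edgeFinset.mp hmem.1)
        rw [SimpleGraph.mem_edgeFinset, SimpleGraph.mem_edgeSet]
        exact ⟨hadj, by cases b <;> simp⟩
      · rintro ⟨e₁, b₁⟩ h₁ ⟨e₂, b₂⟩ h₂ heq
        rw [Finset.mem_product] at h₁ h₂
        have hadj₁ : G.Adj (Quot.out e₁).1 (Quot.out e₁).2 :=
          adj_out G (SimpleGraph.mem_edgeFinset.mp h₁.1)
        rw [Sym2.eq_iff] at heq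
        simp only [Prod.mk.injEq] at heq
        rcases heq with ⟨⟨f1, fb⟩, ⟨f2, _⟩⟩ | ⟨⟨f1, fb1⟩, ⟨f2, fb2⟩⟩
        · have he : e₁ = e₂ := by rw [← out_mk e₁, ← out_mk e₂, f1, f2]
          rw [he, fb]
        · have he : e₁ = e₂ := by
            rw [← out_mk e₁, ← out_mk e₂, f1, f2, Sym2.eq_swap]
          have h12 : (Quot.out e₁).1 = (Quot.out e₂).1 := by rw [he]
          exact absurd (h12.trans f2.symm) hadj₁.ne
      · intro f hf
        have hadjH : (twoLift G s hs).Adj (Quot.out f).1 (Quot.out f).2 :=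
          adj_out _ (SimpleGraph.mem_edgeFinset.mp hf)
        obtain ⟨h1, h2⟩ := hadjH
        have heE : (s((Quot.out f).1.1, (Quot.out f).2.1) : Sym2 V) ∈ G.edgeFinset :=
          SimpleGraph.mem_edgeFinset.mpr (G.mem_edgeSet.mpr h1)
        set e : Sym2 V := s((Quot.out f).1.1, (Quot.out f).2.1) with hedef
        have hout : (s((Quot.out e).1, (Quot.out e).2) : Sym2 V)
            = s((Quot.out f).1.1, (Quot.out f).2.1) := by rw [out_mk]
        rcases Sym2.eq_iff.mp hout with ⟨g1, g2⟩ | ⟨g1, g2⟩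
        · refine ⟨(e, (Quot.out f).1.2),
            Finset.mem_product.mpr ⟨heE, Finset.mem_univ _⟩, ?_⟩
          simp only
          rw [g1, g2]
          have hx : xor (Quot.out f).1.2 (s (Quot.out f).1.1 (Quot.out f).2.1)
              = (Quot.out f).2.2 := by
            rw [← h2]; cases (Quot.out f).1.2 <;> cases (Quot.out f).2.2 <;> rfl
          rw [hx]
          exact out_mk f
        · refine ⟨(e, (Quot.out f).2.2),
            Finset.mem_product.mpr ⟨heE, Finset.mem_univ _⟩, ?_⟩
          simp only
          rw [g1, g2]
          have hx : xor (Quot.out f).2.2 (s (Quot.out f).2.1 (Quot.out f).1.1)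
              = (Quot.out f).1.2 := by
            rw [hs (Quot.out f).2.1 (Quot.out f).1.1, ← h2]
            cases (Quot.out f).1.2 <;> cases (Quot.out f).2.2 <;> rfl
          rw [hx, Sym2.eq_swap]
          exact out_mk f
      · rintro ⟨e, b⟩ _
        exact (Sym2.lift_mk ⟨fun a b => A (ψ a) (ψ b), fun a b => hA (ψ a) (ψ b)⟩
          ((Quot.out e).1, b)
          ((Quot.out e).2, xor b (s (Quot.out e).1 (Quot.out e).2))).symm
    rw [← step2, Finset.prod_product]
    refine Finset.prod_congr rfl fun e he => ?_
    rw [Fintype.prod_bool]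
    cases hse : s (Quot.out e).1 (Quot.out e).2 <;> simp [wgt, hse, mul_comm]
  simp_rw [step]
  refine Finset.sum_nbij' (fun ψ => ((fun u => ψ (u, false)), (fun u => ψ (u, true))))
    (fun p => fun ub => cond ub.2 (p.2 ub.1) (p.1 ub.1)) ?_ ?_ ?_ ?_ ?_
  · intro ψ _; simp only [Finset.mem_univ]
  · intro p _; simp only [Finset.mem_univ]
  · intro ψ _; funext ub; rcases ub with ⟨u, b⟩; cases b <;> rfl
  · intro p _; rfl
  · intro ψ _; rfl

end TP2Aux

theorem TP2_two_lift {q : ℕ} (A : Matrix (Fin q) (Fin q) ℝ)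
    (hnn : ∀ i j, 0 ≤ A i j) (hsymm : A.IsSymm)
    (hTP : ∀ i j r s : Fin q, i < j → r < s → 0 ≤ A i r * A j s - A i s * A j r)
    {V : Type} [Fintype V] (G : SimpleGraph V)
    (s : V → V → Bool) (hs : ∀ u v, s u v = s v u) :
    Z (twoLift G s hs) A ≤ (Z G A) ^ 2 := by
  open TP2Aux in
  have key : (Fintype.card (V → Bool) : ℝ) * Z (twoLift G s hs) A
      ≤ (Fintype.card (V → Bool) : ℝ) * Z G A ^ 2 := by
    calc (Fintype.card (V → Bool) : ℝ) * Z (twoLift G s hs) A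
        = ∑ p : (V → Fin q) × (V → Fin q), TT A G s p.1 p.2 := by
          rw [TP2Aux.Z_twoLift A hsymm G s hs]; exact (TP2Aux.sum_TT A G s).symm
    _ ≤ ∑ p : (V → Fin q) × (V → Fin q), TT A G (fun _ _ => false) p.1 p.2 :=
          Finset.sum_le_sum fun p _ => TP2Aux.TT_le A hnn hTP G s p.1 p.2
    _ = (Fintype.card (V → Bool) : ℝ) * Z G A ^ 2 := by
          rw [TP2Aux.Z_sq A G]; exact TP2Aux.sum_TT A G (fun _ _ => false)
  have hc : (0:ℝ) < (Fintype.card (V → Bool) : ℝ) := by exact_mod_cast Fintype.card_pos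
  exact le_of_mul_le_mul_left key hc
end

section
/- For the random cluster model with q ≥ 1 and w ≥ 0 on a multigraph H with two distinct edges e and f, we have Z(H−{e,f},q,w) · Z(H/{e,f},q,w) ≥ Z((H−e)/f,q,w) · Z((H/e)−f,q,w). -/
open scoped Classical

section GraphAux
set_option linter.unusedSectionVars false
variable {V : Type} [Fintype V]
open SimpleGraph

/-- Number of connected components of a simple graph on a finite vertex set. -/
noncomputable def ncG (G : SimpleGraph V) : ℕ := Nat.card G.ConnectedComponent

lemma reach_sup_edge {G : SimpleGraph V} {u v x y : V}
    (h : (G ⊔ SimpleGraph.edge u v).Reachable x y) :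
    G.Reachable x y ∨ (G.Reachable x u ∧ G.Reachable v y) ∨
      (G.Reachable x v ∧ G.Reachable u y) := by
  obtain ⟨w⟩ := h
  induction w with
  | nil => exact Or.inl (Reachable.refl _)
  | @cons x b y hadj p ih =>
    rw [sup_adj, edge_adj] at hadj
    rcases hadj with hG | ⟨⟨hx, hb⟩ | ⟨hx, hb⟩, hne⟩
    · rcases ih with h1 | ⟨h1, h2⟩ | ⟨h1, h2⟩
      · exact Or.inl (hG.reachable.trans h1)
      · exact Or.inr (Or.inl ⟨hG.reachable.trans h1, h2⟩)
      · exact Or.inr (Or.inr ⟨hG.reachable.trans h1, h2⟩)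
    · subst hx; subst hb
      rcases ih with h1 | ⟨h1, h2⟩ | ⟨h1, h2⟩
      · exact Or.inr (Or.inl ⟨Reachable.refl _, h1⟩)
      · exact Or.inr (Or.inl ⟨Reachable.refl _, h2⟩)
      · exact Or.inl h2
    · subst hx; subst hb
      rcases ih with h1 | ⟨h1, h2⟩ | ⟨h1, h2⟩
      · exact Or.inr (Or.inr ⟨Reachable.refl _, h1⟩)
      · exact Or.inl h2
      · exact Or.inr (Or.inr ⟨Reachable.refl _, h2⟩)

variable {G : SimpleGraph V} {u v : V}

/-- The canonical surjection on connected components induced by adding an edge. -/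
noncomputable def phiAux (G : SimpleGraph V) (u v : V) :
    G.ConnectedComponent → (G ⊔ SimpleGraph.edge u v).ConnectedComponent :=
  SimpleGraph.ConnectedComponent.map (SimpleGraph.Hom.ofLE le_sup_left)

lemma phiAux_mk (x : V) :
    phiAux G u v (G.connectedComponentMk x)
      = (G ⊔ SimpleGraph.edge u v).connectedComponentMk x := rfl

lemma phiAux_surj : Function.Surjective (phiAux G u v) := by
  intro c
  refine c.ind fun x => ⟨G.connectedComponentMk x, rfl⟩

lemma phiAux_fiber {c₁ c₂ : G.ConnectedComponent} (h : phiAux G u v c₁ = phiAux G u v c₂) :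
    c₁ = c₂ ∨ (c₁ = G.connectedComponentMk u ∧ c₂ = G.connectedComponentMk v) ∨
      (c₁ = G.connectedComponentMk v ∧ c₂ = G.connectedComponentMk u) := by
  revert h
  refine SimpleGraph.ConnectedComponent.ind₂ (fun x y h => ?_) c₁ c₂
  rw [phiAux_mk, phiAux_mk, SimpleGraph.ConnectedComponent.eq] at h
  rcases reach_sup_edge h with h1 | ⟨h1, h2⟩ | ⟨h1, h2⟩
  · exact Or.inl (SimpleGraph.ConnectedComponent.sound h1)
  · exact Or.inr (Or.inl ⟨SimpleGraph.ConnectedComponent.sound h1,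
      (SimpleGraph.ConnectedComponent.sound h2).symm⟩)
  · exact Or.inr (Or.inr ⟨SimpleGraph.ConnectedComponent.sound h1,
      (SimpleGraph.ConnectedComponent.sound h2).symm⟩)

lemma ncG_le_sup_edge : ncG G ≤ ncG (G ⊔ SimpleGraph.edge u v) + 1 := by
  classical
  letI : Fintype G.ConnectedComponent := Fintype.ofFinite _
  letI : Fintype (G ⊔ SimpleGraph.edge u v).ConnectedComponent := Fintype.ofFinite _
  have hinj : Function.Injective
      (fun c : {c : G.ConnectedComponent // c ≠ G.connectedComponentMk v} =>
        phiAux G u v c.1) := by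
    rintro ⟨c₁, hc₁⟩ ⟨c₂, hc₂⟩ h
    rcases phiAux_fiber h with h1 | ⟨h1, h2⟩ | ⟨h1, h2⟩
    · exact Subtype.ext h1
    · exact absurd h2 hc₂
    · exact absurd h1 hc₁
  have h2 := Fintype.card_le_of_injective _ hinj
  have h3 : Fintype.card {c : G.ConnectedComponent // c ≠ G.connectedComponentMk v}
      = Fintype.card G.ConnectedComponent - 1 := by
    rw [Fintype.card_subtype_compl, Fintype.card_subtype_eq]
  have h4 : 0 < Fintype.card G.ConnectedComponent := Fintype.card_pos_iff.mpr
    ⟨G.connectedComponentMk v⟩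
  simp only [ncG, Nat.card_eq_fintype_card]
  omega

lemma ncG_sup_edge_of_reachable (h : G.Reachable u v) :
    ncG (G ⊔ SimpleGraph.edge u v) = ncG G := by
  refine (Nat.card_eq_of_bijective (phiAux G u v) ⟨fun c₁ c₂ hc => ?_, phiAux_surj⟩).symm
  rcases phiAux_fiber hc with h1 | ⟨h1, h2⟩ | ⟨h1, h2⟩
  · exact h1
  · rw [h1, h2]; exact SimpleGraph.ConnectedComponent.sound h
  · rw [h1, h2]; exact SimpleGraph.ConnectedComponent.sound h.symm

lemma ncG_sup_edge_of_not_reachable (h : ¬ G.Reachable u v) :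
    ncG (G ⊔ SimpleGraph.edge u v) + 1 ≤ ncG G := by
  classical
  have hne : u ≠ v := fun he => h (he ▸ Reachable.refl u)
  letI : Fintype G.ConnectedComponent := Fintype.ofFinite _
  letI : Fintype (G ⊔ SimpleGraph.edge u v).ConnectedComponent := Fintype.ofFinite _
  have hni : ¬ Function.Injective (phiAux G u v) := by
    intro hi
    have : phiAux G u v (G.connectedComponentMk u)
        = phiAux G u v (G.connectedComponentMk v) := by
      rw [phiAux_mk, phiAux_mk]
      exact SimpleGraph.ConnectedComponent.sound
        (SimpleGraph.Adj.reachable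
          (by rw [sup_adj, edge_adj]; exact Or.inr ⟨Or.inl ⟨rfl, rfl⟩, hne⟩))
    exact h (SimpleGraph.ConnectedComponent.exact (hi this))
  have := Fintype.card_lt_of_surjective_not_injective _ phiAux_surj hni
  simp only [ncG, Nat.card_eq_fintype_card]
  omega

/-- Key submodularity step: adding one edge to a smaller graph decreases the number of
components at least as much as adding it to a larger graph. -/
lemma ncG_key {G H : SimpleGraph V} (hGH : G ≤ H) (u v : V) :
    ncG (G ⊔ SimpleGraph.edge u v) + ncG H ≤ ncG G + ncG (H ⊔ SimpleGraph.edge u v) := by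
  by_cases huv : G.Reachable u v
  · rw [ncG_sup_edge_of_reachable huv, ncG_sup_edge_of_reachable (huv.mono hGH)]
  · have h1 := ncG_sup_edge_of_not_reachable huv
    have h2 : ncG H ≤ ncG (H ⊔ SimpleGraph.edge u v) + 1 := ncG_le_sup_edge
    omega

end GraphAux

/-- The number of connected components of the spanning subgraph of a multigraph
(with vertex set `V`, edges indexed by `E` with endpoints `ends`) using the edges in `F`.
Isolated vertices count as components; loops and parallel edges are allowed (they do
not affect the component structure). -/
noncomputable def kcomp {V E : Type} [Fintype V] (ends : E → Sym2 V) (F : Finset E) : ℕ :=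
  Nat.card (SimpleGraph.fromEdgeSet (↑(F.image ends) : Set (Sym2 V))).ConnectedComponent

section KC
set_option linter.unusedSectionVars false
variable {V E : Type} [Fintype V] [Fintype E] (ends : E → Sym2 V)

lemma kcomp_eq (F : Finset E) :
    kcomp ends F = ncG (SimpleGraph.fromEdgeSet (↑(F.image ends) : Set (Sym2 V))) := rfl

lemma fromEdgeSet_insert_eq (g : E) (F : Finset E) (u v : V) (h : ends g = s(u, v)) :
    SimpleGraph.fromEdgeSet (↑((insert g F).image ends) : Set (Sym2 V))
      = SimpleGraph.fromEdgeSet (↑(F.image ends) : Set (Sym2 V)) ⊔ SimpleGraph.edge u v := by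
  rw [Finset.image_insert, Finset.coe_insert, Set.insert_eq, SimpleGraph.fromEdgeSet_union,
    sup_comm, h]
  rfl

lemma kcomp_insert_le {A B : Finset E} (hAB : A ⊆ B) (g : E) :
    kcomp ends (insert g A) + kcomp ends B ≤ kcomp ends A + kcomp ends (insert g B) := by
  obtain ⟨u, v, huv⟩ : ∃ u v, ends g = s(u, v) :=
    Sym2.ind (fun u v => ⟨u, v, rfl⟩) (ends g)
  rw [kcomp_eq, kcomp_eq, kcomp_eq, kcomp_eq, fromEdgeSet_insert_eq ends g A u v huv,
    fromEdgeSet_insert_eq ends g B u v huv]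
  exact ncG_key
    (SimpleGraph.fromEdgeSet_mono (by exact_mod_cast Finset.image_subset_image hAB)) u v

lemma kcomp_diff_le (C : Finset E) : ∀ {A B : Finset E}, A ⊆ B →
    kcomp ends B + kcomp ends (A ∪ C) ≤ kcomp ends A + kcomp ends (B ∪ C) := by
  induction C using Finset.induction_on with
  | empty => intro A B _; simp [add_comm]
  | @insert a C' ha ih =>
    intro A B hAB
    rw [Finset.union_insert, Finset.union_insert]
    have h1 := ih hAB
    have h2 := kcomp_insert_le ends (Finset.union_subset_union hAB (Finset.Subset.refl C')) a
    omega

/-- Supermodularity of the number of connected components. -/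
lemma kcomp_supermodular (X Y : Finset E) :
    kcomp ends X + kcomp ends Y ≤ kcomp ends (X ∩ Y) + kcomp ends (X ∪ Y) := by
  have := kcomp_diff_le ends Y (Finset.inter_subset_left (s₂ := Y) (s₁ := X))
  rwa [Finset.union_eq_right.mpr Finset.inter_subset_right] at this

end KC

/-- FKG inequality for the random cluster model, rewritten via deletion–contraction:
`Z(H−{e,f}) · Z(H/{e,f}) ≥ Z((H−e)/f) · Z((H/e)−f)` for `q ≥ 1`, `w ≥ 0`.
Deleting an edge restricts the sum to subsets avoiding it; contracting an edge `e`
amounts to counting components of `F ∪ {e}` while not charging `e` a factor `w`. -/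
theorem randomCluster_FKG_deletion_contraction {V E : Type} [Fintype V] [Fintype E]
    (ends : E → Sym2 V) (e f : E) (hef : e ≠ f) (q w : ℝ) (hq : 1 ≤ q) (hw : 0 ≤ w) :
    (∑ F ∈ ((Finset.univ : Finset E) \ {e, f}).powerset,
        q ^ kcomp ends F * w ^ F.card) *
      (∑ F ∈ ((Finset.univ : Finset E) \ {e, f}).powerset,
        q ^ kcomp ends (F ∪ {e, f}) * w ^ F.card)
    ≥ (∑ F ∈ ((Finset.univ : Finset E) \ {e, f}).powerset,
        q ^ kcomp ends (F ∪ {f}) * w ^ F.card) *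
      (∑ F ∈ ((Finset.univ : Finset E) \ {e, f}).powerset,
        q ^ kcomp ends (F ∪ {e}) * w ^ F.card) := by
  have hq0 : (0 : ℝ) ≤ q := le_trans zero_le_one hq
  set u : Finset E := (Finset.univ : Finset E) \ {e, f} with hu
  have hnonneg : ∀ (k : Finset E → ℕ),
      (0 : Finset E → ℝ) ≤ fun F => q ^ k F * w ^ F.card :=
    fun k F => mul_nonneg (pow_nonneg hq0 _) (pow_nonneg hw _)
  have key := Finset.four_functions_theorem u
    (f₁ := fun F => q ^ kcomp ends (F ∪ {f}) * w ^ F.card)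
    (f₂ := fun F => q ^ kcomp ends (F ∪ {e}) * w ^ F.card)
    (f₃ := fun F => q ^ kcomp ends F * w ^ F.card)
    (f₄ := fun F => q ^ kcomp ends (F ∪ {e, f}) * w ^ F.card)
    (hnonneg _) (hnonneg _) (hnonneg _) (hnonneg _)
    (fun s hs t ht => ?_) (Finset.Subset.refl u.powerset) (Finset.Subset.refl u.powerset)
  · rw [Finset.powerset_infs_powerset_self, Finset.powerset_sups_powerset_self] at key
    exact key
  · -- the modularity hypothesis
    have hes : e ∉ s := fun h => by
      have := hs h; simp [hu] at this
    have hfs : f ∉ s := fun h => by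
      have := hs h; simp [hu] at this
    have het : e ∉ t := fun h => by
      have := ht h; simp [hu] at this
    have hft : f ∉ t := fun h => by
      have := ht h; simp [hu] at this
    have hinter : (s ∪ {f}) ∩ (t ∪ {e}) = s ∩ t := by
      ext g
      simp only [Finset.mem_inter, Finset.mem_union, Finset.mem_singleton]
      constructor
      · rintro ⟨hg1 | rfl, hg2 | rfl⟩
        · exact ⟨hg1, hg2⟩
        · exact absurd hg1 hes
        · exact absurd hg2 hft
        · exact absurd rfl hef.symm
      · rintro ⟨h1, h2⟩; exact ⟨Or.inl h1, Or.inl h2⟩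
    have hunion : (s ∪ {f}) ∪ (t ∪ {e}) = (s ∪ t) ∪ {e, f} := by
      ext g
      simp only [Finset.mem_union, Finset.mem_singleton, Finset.mem_insert]
      tauto
    have hk : kcomp ends (s ∪ {f}) + kcomp ends (t ∪ {e})
        ≤ kcomp ends (s ∩ t) + kcomp ends ((s ∪ t) ∪ {e, f}) := by
      have := kcomp_supermodular ends (s ∪ {f}) (t ∪ {e})
      rwa [hinter, hunion] at this
    have hcard : (s ∩ t).card + (s ∪ t).card = s.card + t.card :=
      Finset.card_inter_add_card_union s t
    calc q ^ kcomp ends (s ∪ {f}) * w ^ s.card * (q ^ kcomp ends (t ∪ {e}) * w ^ t.card)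
        = q ^ (kcomp ends (s ∪ {f}) + kcomp ends (t ∪ {e})) * w ^ (s.card + t.card) := by
          rw [pow_add, pow_add]; ring
      _ ≤ q ^ (kcomp ends (s ∩ t) + kcomp ends ((s ∪ t) ∪ {e, f})) * w ^ (s.card + t.card) :=
          mul_le_mul_of_nonneg_right (pow_le_pow_right₀ hq hk) (pow_nonneg hw _)
      _ = q ^ kcomp ends (s ∩ t) * w ^ (s ∩ t).card
            * (q ^ kcomp ends ((s ∪ t) ∪ {e, f}) * w ^ (s ∪ t).card) := by
          rw [pow_add, ← hcard, pow_add]; ring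
end

section
/- Let G be a finite graph and for each edge e let A(e) be a nonnegative 2×2 matrix with det A(e) ≥ 0. Define f_e(1) = a₁₁(e)a₂₂(e) and f_e(−1) = a₁₂(e)a₂₁(e). Then for any sign assignment s ∈ {−1,1}^{E(G)}, Σ_{σ ∈ {−1,1}^{V(G)}} Π_{(u,v)∈E(G)} f_e(s_{uv} σ_u σ_v) ≤ Σ_{σ ∈ {−1,1}^{V(G)}} Π_{(u,v)∈E(G)} f_e(σ_u σ_v). -/
open scoped Classical

/-- The edge function `f_e : {−1,1} → ℝ` associated to the 2×2 matrix `a e`,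
with the sign `+1` encoded by `true` and `−1` by `false`:
`f_e(+1) = a₁₁(e)a₂₂(e)` and `f_e(−1) = a₁₂(e)a₂₁(e)`. -/
def fe {V : Type} (a : Sym2 V → Matrix (Fin 2) (Fin 2) ℝ) (e : Sym2 V) (b : Bool) : ℝ :=
  if b then a e 0 0 * a e 1 1 else a e 0 1 * a e 1 0

/-- The sign `σ_u σ_v ∈ {−1,1}` of an edge, encoded as a Bool (`true` = `+1`):
it is `+1` exactly when the endpoint signs agree. -/
noncomputable def edgeSign {V : Type} (σ : V → Bool) (e : Sym2 V) : Bool :=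
  σ (Quot.out e).1 == σ (Quot.out e).2

/-- `±1` encoding of a Bool. -/
def eps (b : Bool) : ℝ := if b then 1 else -1

lemma eps_beq (x y : Bool) : eps (x == y) = eps x * eps y := by
  cases x <;> cases y <;> norm_num [eps]

lemma abs_eps (b : Bool) : |eps b| = 1 := by cases b <;> simp [eps]

lemma fe_eq {V : Type} (a : Sym2 V → Matrix (Fin 2) (Fin 2) ℝ) (e : Sym2 V) (b : Bool) :
    fe a e b = (a e 0 0 * a e 1 1 + a e 0 1 * a e 1 0) / 2
      + (a e 0 0 * a e 1 1 - a e 0 1 * a e 1 0) / 2 * eps b := by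
  cases b <;> simp [fe, eps] <;> ring

lemma eps_edgeSign {V : Type} (σ : V → Bool) (e : Sym2 V) :
    eps (edgeSign σ e) = eps (σ (Quot.out e).1) * eps (σ (Quot.out e).2) := by
  rw [edgeSign, eps_beq]

lemma prod_pow_ite {V : Type} [Fintype V] (σ : V → Bool) (u : V) :
    ∏ v : V, eps (σ v) ^ (if (u : V) = v then 1 else 0) = eps (σ u) := by
  calc ∏ v : V, eps (σ v) ^ (if (u : V) = v then 1 else 0)
      = ∏ v : V, (if u = v then eps (σ v) else 1) :=
        Finset.prod_congr rfl (fun v _ => by split_ifs <;> simp)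
    _ = eps (σ u) := by rw [Finset.prod_ite_eq]; simp

lemma key_nonneg {V : Type} [Fintype V] (S : Finset (Sym2 V)) :
    0 ≤ ∑ σ : V → Bool, ∏ e ∈ S, eps (edgeSign σ e) := by
  classical
  set d : V → ℕ := fun v => ∑ e ∈ S,
      ((if (Quot.out e).1 = v then 1 else 0) + (if (Quot.out e).2 = v then 1 else 0)) with hd
  have hσ : ∀ σ : V → Bool, ∏ e ∈ S, eps (edgeSign σ e) = ∏ v : V, eps (σ v) ^ d v := by
    intro σ
    have : ∀ v : V, eps (σ v) ^ d v = ∏ e ∈ S,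
        (eps (σ v) ^ (if (Quot.out e).1 = v then 1 else 0) *
         eps (σ v) ^ (if (Quot.out e).2 = v then 1 else 0)) := by
      intro v
      rw [hd]
      simp only [← Finset.prod_pow_eq_pow_sum]
      exact Finset.prod_congr rfl (fun e _ => by rw [pow_add])
    rw [Finset.prod_congr rfl (fun v _ => this v), Finset.prod_comm]
    refine Finset.prod_congr rfl (fun e _ => ?_)
    rw [Finset.prod_mul_distrib, prod_pow_ite, prod_pow_ite, eps_edgeSign]
  calc (0:ℝ) ≤ ∏ v : V, ∑ b : Bool, eps b ^ d v := by
        refine Finset.prod_nonneg (fun v _ => ?_)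
        have : (∑ b : Bool, eps b ^ d v) = 1 + (-1 : ℝ) ^ d v := by
          simp [eps, Fintype.sum_bool, add_comm]
        rw [this]
        rcases Nat.even_or_odd (d v) with h | h
        · rw [h.neg_one_pow]; norm_num
        · rw [h.neg_one_pow]; norm_num
    _ = ∑ σ : V → Bool, ∏ v : V, eps (σ v) ^ d v := Fintype.prod_sum _
    _ = ∑ σ : V → Bool, ∏ e ∈ S, eps (edgeSign σ e) := by
        exact Finset.sum_congr rfl (fun σ _ => (hσ σ).symm)

theorem det_nonneg_signed_sum_le {V : Type} [Fintype V] (G : SimpleGraph V)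
    (a : Sym2 V → Matrix (Fin 2) (Fin 2) ℝ)
    (hnn : ∀ e ∈ G.edgeFinset, ∀ i j, 0 ≤ a e i j)
    (hdet : ∀ e ∈ G.edgeFinset, 0 ≤ a e 0 0 * a e 1 1 - a e 0 1 * a e 1 0)
    (s : Sym2 V → Bool) :
    ∑ σ : V → Bool, ∏ e ∈ G.edgeFinset, fe a e (s e == edgeSign σ e)
      ≤ ∑ σ : V → Bool, ∏ e ∈ G.edgeFinset, fe a e (edgeSign σ e) := by
  classical
  set A : Sym2 V → ℝ := fun e => (a e 0 0 * a e 1 1 + a e 0 1 * a e 1 0) / 2 with hA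
  set B : Sym2 V → ℝ := fun e => (a e 0 0 * a e 1 1 - a e 0 1 * a e 1 0) / 2 with hB
  have hAnn : ∀ e ∈ G.edgeFinset, 0 ≤ A e := fun e he => by
    have h1 := hnn e he 0 0; have h2 := hnn e he 1 1
    have h3 := hnn e he 0 1; have h4 := hnn e he 1 0
    simp only [hA]; positivity
  have hBnn : ∀ e ∈ G.edgeFinset, 0 ≤ B e := fun e he => by
    have := hdet e he; simp only [hB]; linarith
  -- expand both sides
  have expand : ∀ t : Sym2 V → Bool,
      ∑ σ : V → Bool, ∏ e ∈ G.edgeFinset, fe a e (t e == edgeSign σ e)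
        = ∑ S ∈ G.edgeFinset.powerset,
            ((∏ e ∈ S, B e) * (∏ e ∈ S, eps (t e)) * (∏ e ∈ G.edgeFinset \ S, A e)) *
              (∑ σ : V → Bool, ∏ e ∈ S, eps (edgeSign σ e)) := by
    intro t
    have hσ : ∀ σ : V → Bool,
        ∏ e ∈ G.edgeFinset, fe a e (t e == edgeSign σ e)
          = ∑ S ∈ G.edgeFinset.powerset,
              ((∏ e ∈ S, B e) * (∏ e ∈ S, eps (t e)) * (∏ e ∈ G.edgeFinset \ S, A e)) *
                (∏ e ∈ S, eps (edgeSign σ e)) := by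
      intro σ
      have h1 : ∀ e ∈ G.edgeFinset, fe a e (t e == edgeSign σ e)
          = (B e * eps (t e)) * eps (edgeSign σ e) + A e := by
        intro e _
        rw [fe_eq, eps_beq]; simp only [hA, hB]; ring
      rw [Finset.prod_congr rfl h1, Finset.prod_add]
      refine Finset.sum_congr rfl (fun S _ => ?_)
      rw [Finset.prod_mul_distrib, Finset.prod_mul_distrib]; ring
    rw [Finset.sum_congr rfl (fun σ _ => hσ σ), Finset.sum_comm]
    exact Finset.sum_congr rfl (fun S _ => by rw [← Finset.mul_sum])
  have hR : (∑ σ : V → Bool, ∏ e ∈ G.edgeFinset, fe a e (edgeSign σ e))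
      = ∑ σ : V → Bool, ∏ e ∈ G.edgeFinset, fe a e ((fun _ => true) e == edgeSign σ e) :=
    Finset.sum_congr rfl (fun σ _ => Finset.prod_congr rfl (fun e _ => by simp))
  rw [expand s, hR, expand (fun _ => true)]
  refine Finset.sum_le_sum (fun S hS => ?_)
  have hSsub : S ⊆ G.edgeFinset := Finset.mem_powerset.mp hS
  have hT := key_nonneg (V := V) S
  have hBp : 0 ≤ ∏ e ∈ S, B e := Finset.prod_nonneg (fun e he => hBnn e (hSsub he))
  have hAp : 0 ≤ ∏ e ∈ G.edgeFinset \ S, A e :=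
    Finset.prod_nonneg (fun e he => hAnn e (Finset.mem_sdiff.mp he).1)
  have heps1 : ∏ e ∈ S, eps ((fun _ => true) e) = 1 := by simp [eps]
  have hle1 : ∏ e ∈ S, eps (s e) ≤ 1 := by
    have : |∏ e ∈ S, eps (s e)| = 1 := by
      rw [Finset.abs_prod]; exact Finset.prod_eq_one (fun e _ => abs_eps _)
    calc ∏ e ∈ S, eps (s e) ≤ |∏ e ∈ S, eps (s e)| := le_abs_self _
      _ = 1 := this
  rw [heps1]
  have hX : 0 ≤ (∏ e ∈ S, B e) * (∏ e ∈ G.edgeFinset \ S, A e) *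
      (∑ σ : V → Bool, ∏ e ∈ S, eps (edgeSign σ e)) := by positivity
  calc (∏ e ∈ S, B e) * (∏ e ∈ S, eps (s e)) * (∏ e ∈ G.edgeFinset \ S, A e) *
        (∑ σ : V → Bool, ∏ e ∈ S, eps (edgeSign σ e))
      = (∏ e ∈ S, eps (s e)) * ((∏ e ∈ S, B e) * (∏ e ∈ G.edgeFinset \ S, A e) *
        (∑ σ : V → Bool, ∏ e ∈ S, eps (edgeSign σ e))) := by ring
    _ ≤ 1 * ((∏ e ∈ S, B e) * (∏ e ∈ G.edgeFinset \ S, A e) *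
        (∑ σ : V → Bool, ∏ e ∈ S, eps (edgeSign σ e))) := by
        exact mul_le_mul_of_nonneg_right hle1 hX
    _ = (∏ e ∈ S, B e) * 1 * (∏ e ∈ G.edgeFinset \ S, A e) *
        (∑ σ : V → Bool, ∏ e ∈ S, eps (edgeSign σ e)) := by ring
end

section
/- Let G be a bipartite graph. Then for any q-coloring count we have hom(G, K_q) ≥ q^{v(G)} ((q−1)/q)^{e(G)}, where hom(G,K_q) is the number of proper colorings of G with q colors. -/
open scoped Classical

namespace BipAux

variable {V : Type}

/-- properness predicate -/
def proper (G : SimpleGraph V) {q : ℕ} (f : V → Fin q) : Prop :=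
  ∀ a b, G.Adj a b → f a ≠ f b

noncomputable def PC [Fintype V] (G : SimpleGraph V) (q : ℕ) : Finset (V → Fin q) :=
  Finset.univ.filter (fun f => proper G f)

lemma mem_PC [Fintype V] {G : SimpleGraph V} {q : ℕ} {f : V → Fin q} :
    f ∈ PC G q ↔ proper G f := by simp [PC]

/-- the subgraph on vertices colored c or c' -/
def Hf (G' : SimpleGraph V) {q : ℕ} (f : V → Fin q) (c c' : Fin q) : SimpleGraph V where
  Adj x y := G'.Adj x y ∧ (f x = c ∨ f x = c') ∧ (f y = c ∨ f y = c')
  symm := ⟨by rintro x y ⟨h1, h2, h3⟩; exact ⟨h1.symm, h3, h2⟩⟩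
  loopless := ⟨fun x h => G'.loopless.irrefl x h.1⟩

/-- the swapping map -/
noncomputable def Φ (G' : SimpleGraph V) {q : ℕ} (v : V) (c c' : Fin q) (f : V → Fin q) :
    V → Fin q :=
  fun x => if (Hf G' f c c').Reachable v x then Equiv.swap c c' (f x) else f x

lemma swap_eq_left_iff {q : ℕ} {c c' z : Fin q} : Equiv.swap c c' z = c ↔ z = c' := by
  constructor
  · intro h
    apply (Equiv.swap c c').injective
    rw [h, Equiv.swap_apply_right]
  · intro h; rw [h]; exact Equiv.swap_apply_right c c'

lemma swap_eq_right_iff {q : ℕ} {c c' z : Fin q} : Equiv.swap c c' z = c' ↔ z = c := by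
  constructor
  · intro h
    apply (Equiv.swap c c').injective
    rw [h, Equiv.swap_apply_left]
  · intro h; rw [h]; exact Equiv.swap_apply_left c c'

lemma swap_mem_iff {q : ℕ} {c c' z : Fin q} :
    (Equiv.swap c c' z = c ∨ Equiv.swap c c' z = c') ↔ (z = c ∨ z = c') := by
  rw [swap_eq_left_iff, swap_eq_right_iff, or_comm]

/-- colors stay in {c,c'} along walks in Hf -/
lemma walk_mem {G' : SimpleGraph V} {q : ℕ} {f : V → Fin q} {c c' : Fin q} :
    ∀ {a b : V}, (Hf G' f c c').Walk a b → (f a = c ∨ f a = c') → (f b = c ∨ f b = c') := by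
  intro a b w
  induction w with
  | nil => exact id
  | cons h w ih => exact fun _ => ih h.2.2

/-- parity: along walks in Hf, equality of f-colors matches equality of the 2-coloring -/
lemma walk_parity {G G' : SimpleGraph V} (hle : G' ≤ G) {q : ℕ} {f : V → Fin q}
    {c c' : Fin q} (hcc : c ≠ c') (hf : proper G' f) {φ : V → Fin 2} (hφ : proper G φ) :
    ∀ {a b : V}, (Hf G' f c c').Walk a b → (f a = f b ↔ φ a = φ b) := by
  intro a b w
  induction w with
  | nil => simp
  | @cons a y b h w ih =>
    have hfay : f a ≠ f y := hf a y h.1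
    have hφay : φ a ≠ φ y := hφ a y (hle h.1)
    have hfb : f b = c ∨ f b = c' := walk_mem w h.2.2
    have hFin : ∀ x y z : Fin 2, x ≠ y → (x = z ↔ ¬ y = z) := by decide
    have h2 : f a = f b ↔ ¬ f y = f b := by
      obtain ha | ha := h.2.1 <;> obtain hy | hy := h.2.2 <;>
        obtain hb | hb := hfb <;> simp_all <;> tauto
    rw [h2, ih]
    exact (hFin _ _ _ hφay).symm

section Swap

variable {G G' : SimpleGraph V} {q : ℕ} {f : V → Fin q} {c c' : Fin q} {u v : V}

/-- u is not reachable from v in Hf, by parity -/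
lemma not_reach_u (hle : G' ≤ G) (hcc : c ≠ c') (hf : proper G' f)
    {φ : V → Fin 2} (hφ : proper G φ) (hadj : G.Adj u v)
    (hfu : f u = c) (hfv : f v = c) : ¬ (Hf G' f c c').Reachable v u := by
  rintro ⟨w⟩
  have := (walk_parity hle hcc hf hφ w).mp (hfv.trans hfu.symm)
  exact hφ u v hadj this.symm

lemma mem_of_reach (hfv : f v = c) {x : V} (h : (Hf G' f c c').Reachable v x) :
    f x = c ∨ f x = c' := by
  obtain ⟨w⟩ := h
  exact walk_mem w (Or.inl hfv)

lemma Φ_proper (hf : proper G' f) (hfv : f v = c) :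
    proper G' (Φ G' v c c' f) := by
  intro x y hxy
  unfold Φ
  by_cases hx : (Hf G' f c c').Reachable v x <;>
    by_cases hy : (Hf G' f c c').Reachable v y <;> simp only [hx, hy, if_pos, if_neg, if_true,
      if_false]
  · exact fun h => hf x y hxy ((Equiv.swap c c').injective h)
  · -- x reachable, y not
    have hfx : f x = c ∨ f x = c' := mem_of_reach hfv hx
    have hfy : ¬ (f y = c ∨ f y = c') := by
      intro hfy
      exact hy (hx.trans (SimpleGraph.Adj.reachable ⟨hxy, hfx, hfy⟩))
    intro h
    apply hfy
    rw [← h]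
    exact swap_mem_iff.mpr hfx |>.imp (fun h => h) (fun h => h) |>.elim
      (fun h => by rw [h] at *; tauto) (fun h => by rw [h] at *; tauto)
  · have hfy : f y = c ∨ f y = c' := mem_of_reach hfv hy
    have hfx : ¬ (f x = c ∨ f x = c') := by
      intro hfx
      exact hx (hy.trans (SimpleGraph.Adj.reachable ⟨hxy.symm, hfy, hfx⟩))
    intro h
    apply hfx
    rw [h]
    exact swap_mem_iff.mpr hfy
  · exact hf x y hxy

lemma Φ_apply_v (hfv : f v = c) : Φ G' v c c' f v = c' := by
  unfold Φ
  rw [if_pos (SimpleGraph.Reachable.refl v), hfv, Equiv.swap_apply_left]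

lemma Φ_apply_not_reach {x : V} (h : ¬ (Hf G' f c c').Reachable v x) :
    Φ G' v c c' f x = f x := by
  unfold Φ; rw [if_neg h]

lemma Hf_Φ : Hf G' (Φ G' v c c' f) c c' = Hf G' f c c' := by
  have key : ∀ x, (Φ G' v c c' f x = c ∨ Φ G' v c c' f x = c') ↔ (f x = c ∨ f x = c') := by
    intro x
    unfold Φ
    by_cases hx : (Hf G' f c c').Reachable v x
    · rw [if_pos hx]; exact swap_mem_iff
    · rw [if_neg hx]
  ext x y
  show G'.Adj x y ∧ _ ∧ _ ↔ G'.Adj x y ∧ _ ∧ _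
  rw [key x, key y]

lemma Φ_invol : Φ G' v c c' (Φ G' v c c' f) = f := by
  funext x
  conv_lhs => rw [Φ, Hf_Φ]
  by_cases hx : (Hf G' f c c').Reachable v x
  · simp only [if_pos hx]
    rw [Φ, if_pos hx, Equiv.swap_apply_self]
  · simp only [if_neg hx]
    rw [Φ, if_neg hx]

end Swap

section Counting

variable [Fintype V]

lemma N_perm (G' : SimpleGraph V) (q : ℕ) (u v : V) (π : Equiv.Perm (Fin q)) (i j : Fin q) :
    ((PC G' q).filter fun f => f u = i ∧ f v = j).card
      = ((PC G' q).filter fun f => f u = π i ∧ f v = π j).card := by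
  apply Finset.card_bij' (fun f _ => π ∘ f) (fun g _ => π.symm ∘ g)
  · intro f hf
    simp only [Finset.mem_filter, mem_PC] at hf ⊢
    obtain ⟨hp, h1, h2⟩ := hf
    exact ⟨fun a b hab => fun h => hp a b hab (π.injective h),
      by simp [Function.comp, h1], by simp [Function.comp, h2]⟩
  · intro g hg
    simp only [Finset.mem_filter, mem_PC] at hg ⊢
    obtain ⟨hp, h1, h2⟩ := hg
    refine ⟨fun a b hab => fun h => hp a b hab (π.symm.injective h), ?_, ?_⟩
    · simp [Function.comp, h1]
    · simp [Function.comp, h2]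
  · intro f _; funext x; simp
  · intro g _; funext x; simp

lemma step_count {G : SimpleGraph V} {q : ℕ} (hq2 : 2 ≤ q)
    {φ : V → Fin 2} (hφ : proper G φ) {u v : V} (hadj : G.Adj u v) :
    (q - 1) * (PC (G.deleteEdges {s(u,v)}) q).card ≤ q * (PC G q).card := by
  set G' := G.deleteEdges {s(u,v)} with hG'
  have hle : G' ≤ G := SimpleGraph.deleteEdges_le _
  have hG'f : ∀ f : V → Fin q, proper G f ↔ proper G' f ∧ f u ≠ f v := by
    intro f
    constructor
    · intro h; exact ⟨fun a b hab => h a b (hle hab), h u v hadj⟩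
    · rintro ⟨h, huv⟩ a b hab
      by_cases hmem : s(a,b) = s(u,v)
      · rcases Sym2.eq_iff.mp hmem with ⟨rfl, rfl⟩ | ⟨rfl, rfl⟩
        · exact huv
        · exact fun h' => huv h'.symm
      · exact h a b (by rw [hG', SimpleGraph.deleteEdges_adj]; exact ⟨hab, by simpa using hmem⟩)
  have hq0 : 0 < q := by omega
  set c : Fin q := ⟨0, by omega⟩ with hc
  set c' : Fin q := ⟨1, by omega⟩ with hc'
  have hcc : c ≠ c' := by simp [hc, hc', Fin.ext_iff]
  set N : Fin q → Fin q → ℕ :=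
    fun i j => ((PC G' q).filter fun f => f u = i ∧ f v = j).card with hN
  -- swapping trick
  have key1 : N c c ≤ N c c' := by
    apply Finset.card_le_card_of_injOn (Φ G' v c c')
    · intro f hf
      simp only [Finset.mem_coe, Finset.mem_filter, mem_PC] at hf ⊢
      obtain ⟨hp, hfu, hfv⟩ := hf
      refine ⟨Φ_proper hp hfv, ?_, Φ_apply_v hfv⟩
      rw [Φ_apply_not_reach (not_reach_u hle hcc hp hφ hadj hfu hfv)]
      exact hfu
    · intro f1 _ f2 _ h
      calc f1 = Φ G' v c c' (Φ G' v c c' f1) := Φ_invol.symm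
        _ = Φ G' v c c' (Φ G' v c c' f2) := by rw [h]
        _ = f2 := Φ_invol
  -- color symmetry
  have key2 : ∀ i : Fin q, N i i = N c c := by
    intro i
    have := N_perm G' q u v (Equiv.swap i c) i i
    rwa [Equiv.swap_apply_left] at this
  have key3 : ∀ i j : Fin q, i ≠ j → N i j = N c c' := by
    intro i j hij
    have h1 := N_perm G' q u v (Equiv.swap i c) i j
    rw [Equiv.swap_apply_left] at h1
    set j0 : Fin q := Equiv.swap i c j with hj0
    have hj0c : j0 ≠ c := by
      intro h
      apply hij
      have := (Equiv.swap i c).injective (a₁ := j) (a₂ := i)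
      rw [← hj0] at this
      exact (this (h.trans (Equiv.swap_apply_left i c).symm)).symm ▸ rfl
    have h2 := N_perm G' q u v (Equiv.swap j0 c') c j0
    rw [Equiv.swap_apply_left, Equiv.swap_apply_of_ne_of_ne (Ne.symm hj0c) hcc] at h2
    exact h1.trans h2
  -- the total count
  have hsum : (PC G' q).card = ∑ i : Fin q, ∑ j : Fin q, N i j := by
    rw [Finset.card_eq_sum_card_fiberwise
      (f := fun f : V → Fin q => (f u, f v)) (t := Finset.univ) (fun x _ => Finset.mem_univ _)]
    rw [← Fintype.sum_prod_type']
    apply Finset.sum_congr rfl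
    intro p _
    congr 1
    apply Finset.filter_congr
    intro f _
    simp [Prod.ext_iff]
  have hinner : ∀ i : Fin q, ∑ j : Fin q, N i j = N c c + (q - 1) * N c c' := by
    intro i
    rw [← Finset.sum_erase_add _ _ (Finset.mem_univ i), key2,
      Finset.sum_congr rfl (fun j hj => key3 i j (Finset.ne_of_mem_erase hj).symm),
      Finset.sum_const, Finset.card_erase_of_mem (Finset.mem_univ i), Finset.card_univ,
      Fintype.card_fin, smul_eq_mul, add_comm]
  have hC' : (PC G' q).card = q * N c c + q * (q - 1) * N c c' := by
    rw [hsum, Finset.sum_congr rfl (fun i _ => hinner i), Finset.sum_const, Finset.card_univ]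
    simp [Fintype.card_fin, smul_eq_mul]
    ring
  -- count for G
  have hPCG : PC G q = (PC G' q).filter fun f => ¬ f u = f v := by
    ext f
    simp only [Finset.mem_filter, mem_PC, hG'f f]
  have hD : ((PC G' q).filter fun f => f u = f v).card = q * N c c := by
    rw [Finset.card_eq_sum_card_fiberwise
      (f := fun f : V → Fin q => f u) (t := Finset.univ) (fun x _ => Finset.mem_univ _)]
    have : ∀ i : Fin q,
        (((PC G' q).filter fun f => f u = f v).filter fun f => f u = i).card = N i i := by
      intro i
      have heq : (((PC G' q).filter fun f => f u = f v).filter fun f => f u = i)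
          = ((PC G' q).filter fun f => f u = i ∧ f v = i) := by
        rw [Finset.filter_filter]
        apply Finset.filter_congr
        intro f _
        constructor
        · rintro ⟨h1, h2⟩; exact ⟨h2, h1.symm.trans h2⟩
        · rintro ⟨h1, h2⟩; exact ⟨h1.trans h2.symm, h1⟩
      rw [heq]
    rw [Finset.sum_congr rfl (fun i _ => this i), Finset.sum_congr rfl (fun i _ => key2 i),
      Finset.sum_const, Finset.card_univ]
    simp [Fintype.card_fin, smul_eq_mul]
  have hsplit : ((PC G' q).filter fun f => f u = f v).card + (PC G q).card
      = (PC G' q).card := by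
    rw [hPCG]
    exact Finset.card_filter_add_card_filter_not
      (s := PC G' q) (p := fun f => f u = f v)
  have hG2 : (PC G q).card = q * (q - 1) * N c c' := by
    rw [hD, hC'] at hsplit
    exact Nat.add_left_cancel hsplit
  rw [hG2, hC']
  obtain ⟨r, rfl⟩ : ∃ r, q = r + 1 := ⟨q - 1, (Nat.succ_pred_eq_of_pos hq0).symm⟩
  simp only [Nat.add_sub_cancel]
  have h1 : r * N c c ≤ r * N c c' := Nat.mul_le_mul_left _ key1
  calc r * ((r + 1) * N c c + (r + 1) * r * N c c')
      = (r + 1) * (r * N c c) + r * ((r + 1) * r * N c c') := by ring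
    _ ≤ (r + 1) * (r * N c c') + r * ((r + 1) * r * N c c') :=
        Nat.add_le_add_right (Nat.mul_le_mul_left _ h1) _
    _ = (r + 1) * ((r + 1) * r * N c c') := by ring

end Counting

end BipAux

namespace BipAux

lemma card_hom_eq {V : Type} [Fintype V] (G : SimpleGraph V) (q : ℕ) :
    Nat.card (G →g SimpleGraph.completeGraph (Fin q)) = (PC G q).card := by
  have e : (G →g SimpleGraph.completeGraph (Fin q)) ≃ {f : V → Fin q // proper G f} :=
    { toFun := fun φ => ⟨φ, fun a b h => by simpa [SimpleGraph.completeGraph] using φ.map_rel h⟩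
      invFun := fun f => ⟨f.1, fun {a b} h => by simpa [SimpleGraph.completeGraph] using f.2 a b h⟩
      left_inv := fun φ => rfl
      right_inv := fun f => rfl }
  rw [Nat.card_congr e, Nat.card_eq_fintype_card, PC, Fintype.card_subtype]

lemma main_aux {V : Type} [Fintype V] : ∀ (m : ℕ) (G : SimpleGraph V),
    G.edgeFinset.card = m → G.Colorable 2 → ∀ q : ℕ, 1 ≤ q →
    (q : ℝ) ^ (Fintype.card V) * (((q : ℝ) - 1) / q) ^ m ≤ ((PC G q).card : ℝ) := by
  intro m
  induction m using Nat.strong_induction_on with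
  | _ m ih =>
    intro G hm hbip q hq
    rcases Nat.eq_zero_or_pos m with rfl | hmpos
    · -- no edges: all functions are proper
      have hbot : G = ⊥ := by
        rw [← SimpleGraph.edgeSet_eq_empty, ← SimpleGraph.coe_edgeFinset,
          Finset.card_eq_zero.mp hm]
        simp
      subst hbot
      have hall : PC (⊥ : SimpleGraph V) q = Finset.univ := by
        ext f
        simp [mem_PC, proper]
      rw [hall, Finset.card_univ, Fintype.card_fun, Fintype.card_fin]
      rw [pow_zero, mul_one]
      push_cast
      exact le_refl _
    · obtain ⟨e, he⟩ : G.edgeFinset.Nonempty := Finset.card_pos.mp (hm ▸ hmpos)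
      revert he
      refine Sym2.ind ?_ e
      intro u v he
      have hadj : G.Adj u v := by
        rwa [SimpleGraph.mem_edgeFinset, SimpleGraph.mem_edgeSet] at he
      set G' := G.deleteEdges {s(u,v)} with hG'
      have hle : G' ≤ G := SimpleGraph.deleteEdges_le _
      have hcard' : G'.edgeFinset.card = m - 1 := by
        have heq : G'.edgeFinset = G.edgeFinset.erase s(u,v) := by
          ext e'
          simp only [SimpleGraph.mem_edgeFinset, hG', SimpleGraph.edgeSet_deleteEdges,
            Set.mem_diff, Finset.mem_erase, Set.mem_singleton_iff]
          tauto
        rw [heq, Finset.card_erase_of_mem he, hm]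
      have hbip' : G'.Colorable 2 := SimpleGraph.Colorable.mono_left hle hbip
      have IH := ih (m - 1) (by omega) G' (by convert hcard') hbip' q hq
      rcases eq_or_lt_of_le hq with hq1 | hq2
      · -- q = 1
        rw [← hq1]
        push_cast
        rw [sub_self, zero_div, zero_pow (by omega : m ≠ 0), mul_zero]
        positivity
      · have hq2 : 2 ≤ q := hq2
        obtain ⟨col⟩ := hbip
        have hφ : proper G (fun x => col x) := fun a b h => col.valid h
        have key := step_count hq2 hφ hadj
        rw [← hG'] at key
        have hq0R : (0 : ℝ) < q := by positivity
        have hfrac : (0 : ℝ) ≤ ((q : ℝ) - 1) / q := by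
          apply div_nonneg _ (le_of_lt hq0R)
          simp only [sub_nonneg]
          exact_mod_cast hq
        have hkeyR : ((q : ℝ) - 1) * ((PC G' q).card : ℝ) ≤ (q : ℝ) * ((PC G q).card : ℝ) := by
          have hcast : (((q - 1) * (PC G' q).card : ℕ) : ℝ) ≤ ((q * (PC G q).card : ℕ) : ℝ) :=
            Nat.cast_le.mpr key
          rw [Nat.cast_mul, Nat.cast_mul, Nat.cast_sub (by omega : 1 ≤ q), Nat.cast_one] at hcast
          exact hcast
        have hstep : ((q : ℝ) - 1) / q * ((PC G' q).card : ℝ) ≤ ((PC G q).card : ℝ) := by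
          rw [div_mul_eq_mul_div, div_le_iff₀ hq0R]
          calc ((q : ℝ) - 1) * ((PC G' q).card : ℝ) ≤ (q : ℝ) * ((PC G q).card : ℝ) := hkeyR
            _ = ((PC G q).card : ℝ) * q := by ring
        calc (q : ℝ) ^ (Fintype.card V) * (((q : ℝ) - 1) / q) ^ m
            = ((q : ℝ) - 1) / q * ((q : ℝ) ^ (Fintype.card V) * (((q : ℝ) - 1) / q) ^ (m - 1)) := by
              conv_lhs => rw [show m = (m - 1) + 1 by omega]
              ring
          _ ≤ ((q : ℝ) - 1) / q * ((PC G' q).card : ℝ) := by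
              apply mul_le_mul_of_nonneg_left IH hfrac
          _ ≤ ((PC G q).card : ℝ) := hstep

end BipAux

/-- For a bipartite graph `G`, the number of proper `q`-colorings (homomorphisms
into the complete graph `K_q`) is at least `q^{v(G)} ((q−1)/q)^{e(G)}`. -/
theorem bipartite_coloring_lower_bound {V : Type} [Fintype V] (G : SimpleGraph V)
    (hbip : G.Colorable 2) (q : ℕ) (hq : 1 ≤ q) :
    (q : ℝ) ^ (Fintype.card V) * (((q : ℝ) - 1) / q) ^ G.edgeFinset.card
      ≤ (Nat.card (G →g SimpleGraph.completeGraph (Fin q)) : ℝ) := by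
  rw [BipAux.card_hom_eq]
  exact BipAux.main_aux G.edgeFinset.card G rfl hbip q hq
end
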